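/- Let M = (S, I) be a matroid of rank n on a finite set S, linearly represented over a field K by a map R : E → F where (e_i)_{i∈S} is a basis of E (i.e., I ∈ I iff {R(e_i) : i∈I} is linearly independent), and let Z = ker R, of dimension b = |S| − n. For each basis T of M and each j ∈ S∖T, let γ(T,j) be the unique element of Z giving coefficient 1 to e_j and supported on T ∪ {j}. Then (a) the family Z_T = {γ(T,j) : j ∈ S∖T} is a linear basis of Z, and (b) for any basis 𝒵 = (γ_1,…,γ_b) of Z, one has γ_1 ∧ … ∧ γ_b = Σ_{T basis of M} det(𝒵/𝒵_T) · e_{T^c} in ⋀^b E, where e_{T^c} is the wedge (in a fixed order on S) of the e_j with j ∉ T and det(𝒵/𝒵_T) is the change-of-basis determinant. -/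

import Mathlib

/-! Framework: a linear matroid on a finite linearly ordered set `S`, represented over
a field `𝕂` by `R : E → F` with `E = S → 𝕂` (basis `(e_i) = (Pi.single i 1)`), kernel
`Z = ker R`. -/

section Matroid

variable {𝕂 : Type*} [Field 𝕂] {S : Type*} [Fintype S] [DecidableEq S] [LinearOrder S]
  {F : Type*} [AddCommGroup F] [Module 𝕂 F]

/-- `T` is a basis of the matroid represented by `R`: `T` is independent (the images of
the corresponding basis vectors are linearly independent) of maximal cardinality
`n = rk(M) = dim im R`. -/
def IsMBasis (R : (S → 𝕂) →ₗ[𝕂] F) (T : Finset S) : Prop :=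
  T.card = Module.finrank 𝕂 (LinearMap.range R) ∧
  LinearIndependent 𝕂 (fun i : T => R (Pi.single (i : S) 1))

/-- Wedge of a list of vectors of `E`, in the exterior algebra. -/
noncomputable def listWedge (l : List (S → 𝕂)) : ExteriorAlgebra 𝕂 (S → 𝕂) :=
  (l.map (fun c => ExteriorAlgebra.ι 𝕂 c)).prod

/-- The wedge `e_A` of the canonical basis vectors indexed by `A`, in the fixed
order on `S`. -/
noncomputable def eWedge (A : Finset S) : ExteriorAlgebra 𝕂 (S → 𝕂) :=
  listWedge ((A.sort (· ≤ ·)).map (fun i => (Pi.single i (1 : 𝕂) : S → 𝕂)))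

/-- The wedge `γ₁ ∧ … ∧ γₙ` of a finite family of vectors. -/
noncomputable def famWedge {n : ℕ} (γ : Fin n → (S → 𝕂)) :
    ExteriorAlgebra 𝕂 (S → 𝕂) :=
  listWedge ((List.finRange n).map γ)

/-- The change-of-basis determinant `det(𝒵/𝒵_T)` between a basis `γ` of `Z` and the
fundamental basis `𝒵_T = (γ(T,j))_{j ∉ T}`: since `γ(T,j)` is the unique fundamental
basis vector with a (unit) coordinate on `j ∉ T`, this is the determinant of the matrix
of coordinates of the `γᵢ` outside `T` (in the fixed order on `S`). -/
noncomputable def cbDet {n : ℕ} (γ : Fin n → (S → 𝕂)) (T : Finset S) : 𝕂 :=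
  if h : ((Tᶜ : Finset S).sort (· ≤ ·)).length = n then
    Matrix.det (Matrix.of fun i j : Fin n =>
      γ j (((Tᶜ : Finset S).sort (· ≤ ·)).get (Fin.cast h.symm i)))
  else 0

end Matroid

set_option linter.unusedSectionVars false

section Aux

variable {𝕂 : Type*} [Field 𝕂] {S : Type*} [Fintype S] [DecidableEq S] [LinearOrder S]
  {F : Type*} [AddCommGroup F] [Module 𝕂 F]

lemma famWedge_eq_iMulti {b : ℕ} (γ : Fin b → (S → 𝕂)) :
    famWedge γ = ExteriorAlgebra.ιMulti 𝕂 b γ := by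
  rw [ExteriorAlgebra.ιMulti_apply, famWedge, listWedge, List.map_map, List.ofFn_eq_map]
  rfl

lemma eWedge_eq_iMulti {b : ℕ} (A : Finset S) (h : (A.sort (· ≤ ·)).length = b) :
    eWedge A = ExteriorAlgebra.ιMulti 𝕂 b
      (fun i => (Pi.single ((A.sort (· ≤ ·)).get (Fin.cast h.symm i)) (1 : 𝕂) : S → 𝕂)) := by
  subst h
  rw [ExteriorAlgebra.ιMulti_apply, eWedge, listWedge, List.map_map]
  conv_lhs => rw [← List.ofFn_get (A.sort (· ≤ ·)), List.map_ofFn]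
  rfl

/-- The alternating determinant map of coordinates along `a`. -/
noncomputable def detA {b : ℕ} (a : Fin b → S) : (S → 𝕂) [⋀^Fin b]→ₗ[𝕂] 𝕂 :=
  (Matrix.detRowAlternating).compLinearMap (LinearMap.funLeft 𝕂 𝕂 a)

lemma detA_apply {b : ℕ} (a : Fin b → S) (γ : Fin b → (S → 𝕂)) :
    detA a γ = Matrix.det (Matrix.of fun i j : Fin b => γ j (a i)) := by
  rw [← Matrix.det_transpose]
  rfl

lemma cbDet_eq_detA {b : ℕ} (γ : Fin b → (S → 𝕂)) (T : Finset S)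
    (h : ((Tᶜ : Finset S).sort (· ≤ ·)).length = b) :
    cbDet γ T = detA (fun i => ((Tᶜ : Finset S).sort (· ≤ ·)).get (Fin.cast h.symm i)) γ := by
  rw [cbDet, dif_pos h, detA_apply]

noncomputable def rhsMap (b : ℕ) :
    MultilinearMap 𝕂 (fun _ : Fin b => (S → 𝕂)) (ExteriorAlgebra 𝕂 (S → 𝕂)) :=
  ∑ T : Finset S,
    if h : ((Tᶜ : Finset S).sort (· ≤ ·)).length = b then
      (LinearMap.toSpanSingleton 𝕂 _ (eWedge (Tᶜ : Finset S))).compMultilinearMap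
        (detA (fun i => ((Tᶜ : Finset S).sort (· ≤ ·)).get (Fin.cast h.symm i))).toMultilinearMap
    else 0

lemma rhsMap_apply {b : ℕ} (γ : Fin b → (S → 𝕂)) :
    rhsMap b γ = ∑ T : Finset S, cbDet γ T • eWedge (Tᶜ : Finset S) := by
  rw [rhsMap, MultilinearMap.sum_apply]
  refine Finset.sum_congr rfl fun T _ => ?_
  by_cases h : ((Tᶜ : Finset S).sort (· ≤ ·)).length = b
  · rw [dif_pos h, cbDet_eq_detA γ T h]
    rfl
  · rw [dif_neg h, cbDet, dif_neg h, zero_smul]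
    rfl

end Aux

section Exp
variable {𝕂 : Type*} [Field 𝕂] {S : Type*} [Fintype S] [DecidableEq S] [LinearOrder S]

lemma single_not_inj {b : ℕ} {v : Fin b → S} (hv : ¬ Function.Injective v) :
    ¬ Function.Injective (fun i => (Pi.single (v i) (1 : 𝕂) : S → 𝕂)) := by
  intro h
  apply hv
  intro i j hij
  exact h (congrArg (fun s => (Pi.single s (1:𝕂) : S → 𝕂)) hij)

lemma cbDet_zero_of_not_inj {b : ℕ} {γ : Fin b → (S → 𝕂)} (T : Finset S)
    (h : ¬ Function.Injective γ) : cbDet γ T = 0 := by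
  by_cases hl : ((Tᶜ : Finset S).sort (· ≤ ·)).length = b
  · rw [cbDet_eq_detA γ T hl]
    exact AlternatingMap.map_eq_zero_of_not_injective _ _ h
  · rw [cbDet, dif_neg hl]

lemma cbDet_compl_eq_detA {b : ℕ} (γ : Fin b → (S → 𝕂)) (A : Finset S)
    (h : (A.sort (· ≤ ·)).length = b) :
    cbDet γ Aᶜ = detA (fun i => (A.sort (· ≤ ·)).get (Fin.cast h.symm i)) γ := by
  have hll : ((Aᶜᶜ : Finset S).sort (· ≤ ·)) = A.sort (· ≤ ·) := by rw [compl_compl]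
  have h' : ((Aᶜᶜ : Finset S).sort (· ≤ ·)).length = b := by rw [hll]; exact h
  rw [cbDet, dif_pos h', detA_apply]
  congr 1
  ext i j
  rw [Matrix.of_apply, Matrix.of_apply]
  congr 1
  rw [List.get_of_eq hll]
  exact congrArg _ (Fin.ext rfl)

lemma expansion {b : ℕ} (γ : Fin b → (S → 𝕂)) :
    ExteriorAlgebra.ιMulti 𝕂 b γ = rhsMap b γ := by
  have key : (ExteriorAlgebra.ιMulti 𝕂 b (M := S → 𝕂)).toMultilinearMap = rhsMap b := by
    apply Module.Basis.ext_multilinear (fun _ => Pi.basisFun 𝕂 S)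
    intro v
    simp only [Pi.basisFun_apply, AlternatingMap.coe_multilinearMap]
    by_cases hv : Function.Injective v
    · -- injective case
      set B : Finset S := Finset.image v Finset.univ with hB
      have hcardB : B.card = b := by
        rw [hB, Finset.card_image_of_injective _ hv, Finset.card_univ, Fintype.card_fin]
      have h : (B.sort (· ≤ ·)).length = b := by rw [Finset.length_sort]; exact hcardB
      set a : Fin b → S := fun i => (B.sort (· ≤ ·)).get (Fin.cast h.symm i) with ha
      have ha_inj : Function.Injective a := by
        intro i j hij
        have h2 := (List.Nodup.get_inj_iff (Finset.sort_nodup B (· ≤ ·))).mp hij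
        exact Fin.cast_injective h.symm h2
      have hsurj : ∀ i : Fin b, ∃ k, a k = v i := by
        intro i
        have hvB : v i ∈ B := Finset.mem_image_of_mem v (Finset.mem_univ i)
        rw [← Finset.mem_sort (α := S) (· ≤ ·), List.mem_iff_get] at hvB
        obtain ⟨idx, hidx⟩ := hvB
        exact ⟨Fin.cast h idx, hidx⟩
      choose f hf using hsurj
      have hfinj : Function.Injective f := fun i j hij => hv (by rw [← hf, ← hf, hij])
      let σ : Equiv.Perm (Fin b) := Equiv.ofBijective f (Finite.injective_iff_bijective.mp hfinj)
      have hva : ∀ i, v i = a (σ i) := fun i => (hf i).symm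
      rw [rhsMap_apply]
      rw [Finset.sum_eq_single (Bᶜ : Finset S)]
      · -- main term
        rw [compl_compl]
        have hM : (Matrix.of fun i j : Fin b =>
            (Pi.single (v j) (1:𝕂) : S → 𝕂) (a i)) = (σ⁻¹).permMatrix 𝕂 := by
          ext i j
          show (Pi.single (v j) (1:𝕂) : S → 𝕂) (a i) = ((σ⁻¹).permMatrix 𝕂) i j
          have hrhs : ((σ⁻¹ : Equiv.Perm (Fin b)).permMatrix 𝕂) i j
              = if j = σ⁻¹ i then 1 else 0 := by
            simp [Equiv.Perm.permMatrix, PEquiv.toMatrix_apply, Equiv.toPEquiv_apply, eq_comm]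
          rw [hva j, Pi.single_apply, hrhs]
          by_cases hc : i = σ j
          · have hc' : j = σ⁻¹ i := by rw [hc]; simp
            rw [if_pos (congrArg a hc), if_pos hc']
          · have h1 : ¬ a i = a (σ j) := fun e => hc (ha_inj e)
            have h2 : ¬ j = σ⁻¹ i := fun e => hc (by rw [e]; simp)
            rw [if_neg h1, if_neg h2]
        have hdet : detA (fun i : Fin b => (B.sort (· ≤ ·)).get (Fin.cast h.symm i))
            (fun i => (Pi.single (v i) (1:𝕂) : S → 𝕂)) = ((Equiv.Perm.sign σ : ℤ) : 𝕂) := by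
          simp only [detA_apply]
          rw [show (Matrix.of fun i j : Fin b =>
              (Pi.single (v j) (1:𝕂) : S → 𝕂) ((B.sort (· ≤ ·)).get (Fin.cast h.symm i)))
              = (σ⁻¹).permMatrix 𝕂 from hM]
          rw [Matrix.det_permutation, Equiv.Perm.sign_inv]
        rw [cbDet_compl_eq_detA _ B h, hdet, eWedge_eq_iMulti B h]
        have hcomp : (fun i => (Pi.single (v i) (1:𝕂) : S → 𝕂))
            = (fun i => (Pi.single ((B.sort (· ≤ ·)).get (Fin.cast h.symm i)) (1:𝕂) : S → 𝕂)) ∘ σ := by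
          funext i
          exact congrArg (fun s => (Pi.single s (1:𝕂) : S → 𝕂)) (hf i).symm
        rw [hcomp, AlternatingMap.map_perm]
        rcases Int.units_eq_one_or (Equiv.Perm.sign σ) with hs | hs <;> simp [hs]
      · -- other terms
        intro T _ hTne
        by_cases hl : ((Tᶜ : Finset S).sort (· ≤ ·)).length = b
        · have hTcB : (Tᶜ : Finset S) ≠ B := by
            intro hc; exact hTne (by rw [← hc, compl_compl])
          have hcardTc : (Tᶜ : Finset S).card = b := by
            rw [← Finset.length_sort (α := S) (· ≤ ·)]; exact hl
          have hns : ¬ (Tᶜ : Finset S) ⊆ B := fun hs =>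
            hTcB (Finset.eq_of_subset_of_card_le hs (by rw [hcardB, hcardTc]))
          obtain ⟨x, hxTc, hxB⟩ := Finset.not_subset.mp hns
          rw [← Finset.mem_sort (α := S) (· ≤ ·), List.mem_iff_get] at hxTc
          obtain ⟨idx, hidx⟩ := hxTc
          have hz : cbDet (fun i => (Pi.single (v i) (1:𝕂) : S → 𝕂)) T = 0 := by
            rw [cbDet, dif_pos hl]
            apply Matrix.det_eq_zero_of_row_eq_zero (Fin.cast hl idx)
            intro j
            rw [Matrix.of_apply]
            have he : ((Tᶜ : Finset S).sort (· ≤ ·)).get (Fin.cast hl.symm (Fin.cast hl idx)) = x := hidx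
            rw [he, Pi.single_apply]
            have hxv : ¬ x = v j := fun hc =>
              hxB (hc ▸ Finset.mem_image_of_mem v (Finset.mem_univ j))
            simp [hxv]
          rw [hz, zero_smul]
        · rw [cbDet, dif_neg hl, zero_smul]
      · intro hc; exact absurd (Finset.mem_univ _) hc
    · -- non-injective case
      rw [AlternatingMap.map_eq_zero_of_not_injective _ _ (single_not_inj hv), rhsMap_apply]
      symm
      exact Finset.sum_eq_zero fun T _ => by
        rw [cbDet_zero_of_not_inj T (single_not_inj hv), zero_smul]
  exact DFunLike.congr_fun key γ

end Exp

lemma sum_single_coords {𝕂 : Type*} [Field 𝕂] {S : Type*} [Fintype S] [DecidableEq S]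
    (T : Finset S) (w : S → 𝕂) (hw : ∀ s ∉ T, w s = 0) :
    (∑ i : T, w (i : S) • (Pi.single (i : S) (1 : 𝕂) : S → 𝕂)) = w := by
  funext s
  rw [Finset.sum_apply]
  by_cases hs : s ∈ T
  · rw [Finset.sum_eq_single (⟨s, hs⟩ : T)]
    · simp
    · intro i _ hne
      have hne' : ¬ s = (i : S) := fun e => hne (Subtype.ext e.symm)
      simp [Pi.single_apply, hne']
    · intro hcon; exact absurd (Finset.mem_univ _) hcon
  · rw [hw s hs]
    apply Finset.sum_eq_zero
    intro i _
    have hne' : ¬ s = (i : S) := fun e => hs (e ▸ i.2)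
    simp [Pi.single_apply, hne']

open Classical

/-- **Fundamental circuits and the circuit–basis identity for linear matroids.**
Let `M` be a matroid of rank `n` on `S`, represented by `R` with kernel `Z` of
dimension `b`.  (a) For each basis `T` of `M` and `j ∉ T` there is a unique element
`γ(T,j) ∈ Z` with coefficient `1` on `e_j` and supported on `T ∪ {j}`, and the family
`𝒵_T = (γ(T,j))_{j ∉ T}` is a linear basis of `Z`.  (b) For any basis
`𝒵 = (γ₁,…,γ_b)` of `Z`, one has, in `⋀^b E`,
`γ₁ ∧ … ∧ γ_b = Σ_{T basis of M} det(𝒵/𝒵_T) • e_{T^c}`. -/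
theorem circuit_basis_identity
    {𝕂 : Type*} [Field 𝕂] {S : Type*} [Fintype S] [DecidableEq S] [LinearOrder S]
    {F : Type*} [AddCommGroup F] [Module 𝕂 F]
    (R : (S → 𝕂) →ₗ[𝕂] F)
    (b : ℕ) (hb : Module.finrank 𝕂 (LinearMap.ker R) = b)
    -- the fundamental circuit elements `γ(T,j)`
    (g : Finset S → S → (S → 𝕂))
    (hg : ∀ T j, IsMBasis R T → j ∉ T →
      R (g T j) = 0 ∧ g T j j = 1 ∧ ∀ i, i ∉ T → i ≠ j → g T j i = 0)
    -- a basis `𝒵` of `Z = ker R`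
    (γ : Fin b → (S → 𝕂))
    (hγ_indep : LinearIndependent 𝕂 γ)
    (hγ_span : Submodule.span 𝕂 (Set.range γ) = LinearMap.ker R) :
    -- uniqueness of the fundamental circuit elements
    (∀ T j, IsMBasis R T → j ∉ T →
      ∀ c : S → 𝕂, R c = 0 → c j = 1 → (∀ i, i ∉ T → i ≠ j → c i = 0) →
        c = g T j) ∧
    -- (a) `𝒵_T` is a linear basis of `Z`
    (∀ T : Finset S, IsMBasis R T →
      LinearIndependent 𝕂 (fun j : (Tᶜ : Finset S) => g T j) ∧
      Submodule.span 𝕂 (Set.range (fun j : (Tᶜ : Finset S) => g T (j : S))) =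
        LinearMap.ker R) ∧
    -- (b) the circuit–basis identity
    famWedge γ =
      ∑ T : Finset S,
        if IsMBasis R T then cbDet γ T • eWedge (Tᶜ : Finset S) else 0 := by
  have hrn := LinearMap.finrank_range_add_finrank_ker R
  rw [Module.finrank_fintype_fun_eq_card] at hrn
  -- uniqueness
  have uniq : ∀ T j, IsMBasis R T → j ∉ T →
      ∀ c : S → 𝕂, R c = 0 → c j = 1 → (∀ i, i ∉ T → i ≠ j → c i = 0) →
        c = g T j := by
    intro T j hT hj c hRc hcj hcsupp
    obtain ⟨hg1, hg2, hg3⟩ := hg T j hT hj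
    set w : S → 𝕂 := c - g T j with hw
    have hw_off : ∀ s ∉ T, w s = 0 := by
      intro s hs
      by_cases hsj : s = j
      · subst hsj; simp [hw, hcj, hg2]
      · simp [hw, hcsupp s hs hsj, hg3 s hs hsj]
    have hw_sum := sum_single_coords T w hw_off
    have hRw : R w = 0 := by simp [hw, map_sub, hRc, hg1]
    have hall : ∀ i : T, w (i : S) = 0 := by
      have hli := hT.2
      rw [Fintype.linearIndependent_iff] at hli
      apply hli (fun i : T => w (i : S))
      calc ∑ i : T, w (i : S) • R (Pi.single (i : S) 1)
          = R (∑ i : T, w (i : S) • (Pi.single (i : S) (1:𝕂) : S → 𝕂)) := by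
            rw [map_sum]; simp only [map_smul]
        _ = R w := by rw [hw_sum]
        _ = 0 := hRw
    have hwz : w = 0 := by
      funext s
      by_cases hs : s ∈ T
      · exact hall ⟨s, hs⟩
      · exact hw_off s hs
    have hcz : c - g T j = 0 := by rw [← hw]; exact hwz
    exact sub_eq_zero.mp hcz
  refine ⟨uniq, ?_, ?_⟩
  · -- part (a)
    intro T hT
    have hcardTc : (Tᶜ : Finset S).card = b := by
      have h1 := Finset.card_add_card_compl T
      have h2 : T.card = Module.finrank 𝕂 (LinearMap.range R) := hT.1
      omega
    have hgval : ∀ (j j₀ : (Tᶜ : Finset S)), g T (j : S) (j₀ : S)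
        = if (j₀ : S) = (j : S) then 1 else 0 := by
      intro j j₀
      have hjT : (j : S) ∉ T := Finset.mem_compl.mp j.2
      have hj₀T : (j₀ : S) ∉ T := Finset.mem_compl.mp j₀.2
      obtain ⟨_, hg2, hg3⟩ := hg T j hT hjT
      by_cases he : (j₀ : S) = (j : S)
      · rw [if_pos he, he, hg2]
      · rw [if_neg he, hg3 _ hj₀T he]
    have hindep : LinearIndependent 𝕂 (fun j : (Tᶜ : Finset S) => g T (j : S)) := by
      rw [Fintype.linearIndependent_iff]
      intro c hc j₀
      have hcc := congrFun hc (j₀ : S)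
      rw [Finset.sum_apply] at hcc
      rw [Finset.sum_eq_single j₀] at hcc
      · simpa [hgval j₀ j₀] using hcc
      · intro i _ hne
        have hne' : ¬ (j₀ : S) = (i : S) := fun e => hne (Subtype.ext e.symm)
        simp [hgval i j₀, hne']
      · intro hcon; exact absurd (Finset.mem_univ _) hcon
    refine ⟨hindep, ?_⟩
    have hle : Submodule.span 𝕂 (Set.range fun j : (Tᶜ : Finset S) => g T (j : S))
        ≤ LinearMap.ker R := by
      rw [Submodule.span_le]
      rintro _ ⟨j, rfl⟩
      exact LinearMap.mem_ker.mpr (hg T j hT (Finset.mem_compl.mp j.2)).1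
    apply Submodule.eq_of_le_of_finrank_le hle
    rw [hb, finrank_span_eq_card hindep, Fintype.card_coe, hcardTc]
  · -- part (b)
    have lemB : ∀ T : Finset S, ¬ IsMBasis R T → cbDet γ T = 0 := by
      intro T hMB
      by_cases hl : ((Tᶜ : Finset S).sort (· ≤ ·)).length = b
      swap
      · rw [cbDet, dif_neg hl]
      have hcardTc : (Tᶜ : Finset S).card = b := by
        rw [← Finset.length_sort (α := S) (· ≤ ·)]; exact hl
      have hcT : T.card = Module.finrank 𝕂 (LinearMap.range R) := by
        have h1 := Finset.card_add_card_compl T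
        omega
      have hdep : ¬ LinearIndependent 𝕂 (fun i : T => R (Pi.single (i : S) 1)) :=
        fun hli => hMB ⟨hcT, hli⟩
      rw [Fintype.not_linearIndependent_iff] at hdep
      obtain ⟨c, hc0, i₀, hi₀⟩ := hdep
      set x : S → 𝕂 := fun s => if hs : s ∈ T then c ⟨s, hs⟩ else 0 with hx
      have hx_off : ∀ s ∉ T, x s = 0 := fun s hs => by simp [hx, hs]
      have hxi : ∀ i : T, x (i : S) = c i := by intro i; simp [hx, i.2]
      have hx_sum := sum_single_coords T x hx_off
      have hRx : R x = 0 := by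
        rw [← hx_sum, map_sum]
        simp only [map_smul]
        rw [show (∑ i : T, x (i : S) • R (Pi.single (i : S) 1))
            = ∑ i : T, c i • R (Pi.single (i : S) 1) from
          Finset.sum_congr rfl fun i _ => by rw [hxi i]]
        exact hc0
      have hxmem : x ∈ Submodule.span 𝕂 (Set.range γ) := by
        rw [hγ_span]; exact LinearMap.mem_ker.mpr hRx
      rw [Submodule.mem_span_range_iff_exists_fun] at hxmem
      obtain ⟨d, hd⟩ := hxmem
      have hdne : d ≠ 0 := by
        intro h0
        rw [h0] at hd
        simp only [Pi.zero_apply, zero_smul, Finset.sum_const_zero] at hd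
        have hxc := hxi i₀
        rw [← hd] at hxc
        exact hi₀ (by simpa using hxc.symm)
      rw [cbDet, dif_pos hl, ← Matrix.exists_mulVec_eq_zero_iff]
      refine ⟨d, hdne, ?_⟩
      funext i
      have hai : ((Tᶜ : Finset S).sort (· ≤ ·)).get (Fin.cast hl.symm i) ∈ (Tᶜ : Finset S) :=
        (Finset.mem_sort (α := S) (· ≤ ·)).mp (List.get_mem _ _)
      have hx0 : x (((Tᶜ : Finset S).sort (· ≤ ·)).get (Fin.cast hl.symm i)) = 0 :=
        hx_off _ (Finset.mem_compl.mp hai)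
      calc (Matrix.mulVec (Matrix.of (fun i j : Fin b =>
              γ j (((Tᶜ : Finset S).sort (· ≤ ·)).get (Fin.cast hl.symm i)))) d) i
          = ∑ j, γ j (((Tᶜ : Finset S).sort (· ≤ ·)).get (Fin.cast hl.symm i)) * d j := rfl
        _ = (∑ j, d j • γ j) (((Tᶜ : Finset S).sort (· ≤ ·)).get (Fin.cast hl.symm i)) := by
            rw [Finset.sum_apply]
            exact Finset.sum_congr rfl fun j _ => by
              rw [Pi.smul_apply, smul_eq_mul, mul_comm]
        _ = x (((Tᶜ : Finset S).sort (· ≤ ·)).get (Fin.cast hl.symm i)) := by rw [hd]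
        _ = 0 := hx0
    rw [famWedge_eq_iMulti, expansion, rhsMap_apply]
    refine Finset.sum_congr rfl fun T _ => ?_
    by_cases hMB : IsMBasis R T
    · rw [if_pos hMB]
    · rw [if_neg hMB, lemB T hMB, zero_smul]
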